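/- Let μ be a Borel probability measure on ℝ^1 with compact support such that μ*μ has a bounded density. Then μ cannot satisfy the two-sided regularity condition C^{-1} r^{1/2} ≤ μ(B(x,r)) ≤ C r^{1/2} for all x in its support and 0 < r < 1 (for any constant C ≥ 1). -/

import Mathlib

open MeasureTheory Metric
open scoped ENNReal

lemma sq_sum_le_card {ι : Type*} (J : Finset ι) (x : ι → ℝ≥0∞) :
    (∑ j ∈ J, x j) ^ 2 ≤ (2 * J.card) * ∑ j ∈ J, (x j) ^ 2 := by
  rw [sq, Finset.sum_mul_sum]
  calc ∑ i ∈ J, ∑ j ∈ J, x i * x j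
      ≤ ∑ i ∈ J, ∑ j ∈ J, ((x i) ^ 2 + (x j) ^ 2) := by
        gcongr with i hi j hj
        rcases le_total (x i) (x j) with h | h
        · calc x i * x j ≤ x j * x j := by gcongr
            _ = x j ^ 2 := (sq (x j)).symm
            _ ≤ _ := le_add_self
        · calc x i * x j ≤ x i * x i := by gcongr
            _ = x i ^ 2 := (sq (x i)).symm
            _ ≤ _ := self_le_add_right _ _
    _ = (2 * J.card) * ∑ j ∈ J, (x j) ^ 2 := by
        simp only [Finset.sum_add_distrib, Finset.sum_const, nsmul_eq_mul,
          ← Finset.mul_sum]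
        ring

lemma measurePreserving_cross_swap (μ : Measure ℝ) [IsProbabilityMeasure μ] :
    MeasurePreserving (fun q : (ℝ × ℝ) × (ℝ × ℝ) => ((q.1.1, q.2.2), (q.2.1, q.1.2)))
      ((μ.prod μ).prod (μ.prod μ)) ((μ.prod μ).prod (μ.prod μ)) := by
  have h1 : MeasurePreserving (Prod.map (id : ℝ → ℝ) (Prod.swap : ℝ × ℝ → ℝ × ℝ))
      (μ.prod (μ.prod μ)) (μ.prod (μ.prod μ)) :=
    (MeasurePreserving.id μ).prod Measure.measurePreserving_swap
  have h2 : MeasurePreserving (MeasurableEquiv.prodAssoc.symm : ℝ × (ℝ × ℝ) ≃ᵐ (ℝ × ℝ) × ℝ)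
      (μ.prod (μ.prod μ)) ((μ.prod μ).prod μ) :=
    (measurePreserving_prodAssoc μ μ μ).symm MeasurableEquiv.prodAssoc
  have h3 : MeasurePreserving (Prod.map (Prod.swap : ℝ × ℝ → ℝ × ℝ) (id : ℝ → ℝ))
      ((μ.prod μ).prod μ) ((μ.prod μ).prod μ) :=
    Measure.measurePreserving_swap.prod (MeasurePreserving.id μ)
  have h4 : MeasurePreserving (MeasurableEquiv.prodAssoc : (ℝ × ℝ) × ℝ ≃ᵐ ℝ × (ℝ × ℝ))
      ((μ.prod μ).prod μ) (μ.prod (μ.prod μ)) :=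
    measurePreserving_prodAssoc μ μ μ
  have hf : MeasurePreserving
      (fun p : ℝ × (ℝ × ℝ) => (p.2.2, (p.2.1, p.1)))
      (μ.prod (μ.prod μ)) (μ.prod (μ.prod μ)) := by
    have h := h1.comp (h4.comp (h3.comp (h2.comp h1)))
    convert h using 1
    rfl
  have hA : MeasurePreserving
      (MeasurableEquiv.prodAssoc : (ℝ × ℝ) × (ℝ × ℝ) ≃ᵐ ℝ × (ℝ × (ℝ × ℝ)))
      ((μ.prod μ).prod (μ.prod μ)) (μ.prod (μ.prod (μ.prod μ))) :=
    measurePreserving_prodAssoc μ μ (μ.prod μ)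
  have hA' : MeasurePreserving
      (MeasurableEquiv.prodAssoc.symm : ℝ × (ℝ × (ℝ × ℝ)) ≃ᵐ (ℝ × ℝ) × (ℝ × ℝ))
      (μ.prod (μ.prod (μ.prod μ))) ((μ.prod μ).prod (μ.prod μ)) :=
    hA.symm MeasurableEquiv.prodAssoc
  have hmid : MeasurePreserving
      (Prod.map (id : ℝ → ℝ) (fun p : ℝ × (ℝ × ℝ) => (p.2.2, (p.2.1, p.1))))
      (μ.prod (μ.prod (μ.prod μ))) (μ.prod (μ.prod (μ.prod μ))) :=
    (MeasurePreserving.id μ).prod hf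
  have h := hA'.comp (hmid.comp hA)
  convert h using 1
  rfl

lemma sum_energy_eq_diff_energy (μ : Measure ℝ) [IsProbabilityMeasure μ] (r : ℝ) :
    ((Measure.map (fun p : ℝ × ℝ => p.1 + p.2) (μ.prod μ)).prod
        (Measure.map (fun p : ℝ × ℝ => p.1 + p.2) (μ.prod μ)))
      {p : ℝ × ℝ | |p.1 - p.2| ≤ r} =
    ((Measure.map (fun p : ℝ × ℝ => p.1 - p.2) (μ.prod μ)).prod
        (Measure.map (fun p : ℝ × ℝ => p.1 - p.2) (μ.prod μ)))
      {p : ℝ × ℝ | |p.1 - p.2| ≤ r} := by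
  have hadd : Measurable (fun p : ℝ × ℝ => p.1 + p.2) := measurable_fst.add measurable_snd
  have hsub : Measurable (fun p : ℝ × ℝ => p.1 - p.2) := measurable_fst.sub measurable_snd
  have hE : MeasurableSet {p : ℝ × ℝ | |p.1 - p.2| ≤ r} := by
    apply measurableSet_le
    · exact (measurable_fst.sub measurable_snd).abs
    · exact measurable_const
  rw [Measure.map_prod_map _ _ hadd hadd, Measure.map_prod_map _ _ hsub hsub,
    Measure.map_apply (hadd.prodMap hadd) hE, Measure.map_apply (hsub.prodMap hsub) hE]
  have key := (measurePreserving_cross_swap μ).measure_preimage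
    (s := Prod.map (fun p : ℝ × ℝ => p.1 - p.2) (fun p : ℝ × ℝ => p.1 - p.2) ⁻¹'
      {p : ℝ × ℝ | |p.1 - p.2| ≤ r}) (((hsub.prodMap hsub) hE).nullMeasurableSet)
  rw [← key]
  congr 1
  ext ⟨⟨a, b⟩, ⟨c, d⟩⟩
  simp only [Set.mem_preimage, Prod.map_apply, Set.mem_setOf_eq]
  constructor <;> intro h <;> (convert h using 2 <;> ring)

set_option maxHeartbeats 2000000 in
/-- If `μ` is a compactly supported probability measure on `ℝ` whose convolution
square has a bounded density, then `μ` cannot be Ahlfors regular of degree `1/2`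
on a compact carrier. -/
theorem no_half_regularity_of_conv_sq_bounded (μ : Measure ℝ)
    [IsProbabilityMeasure μ] (K₀ : Set ℝ) (hK₀ : IsCompact K₀) (hμK₀ : μ K₀ᶜ = 0)
    (M : ℝ)
    (hbd : ∀ A : Set ℝ, MeasurableSet A →
      Measure.map (fun p : ℝ × ℝ => p.1 + p.2) (μ.prod μ) A ≤
        ENNReal.ofReal M * volume A) :
    ∀ K : Set ℝ, IsCompact K → μ Kᶜ = 0 →
      ¬ ∃ C : ℝ, 1 ≤ C ∧ ∀ x ∈ K, ∀ r : ℝ, 0 < r → r < 1 →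
        ENNReal.ofReal (C⁻¹ * r ^ (1/2 : ℝ)) ≤ μ (ball x r) ∧
        μ (ball x r) ≤ ENNReal.ofReal (C * r ^ (1/2 : ℝ)) := by
  intro K hK hμK
  rintro ⟨C, hC1, hreg⟩
  classical
  have hC0 : (0:ℝ) < C := lt_of_lt_of_le one_pos hC1
  have hK1 : μ K = 1 := by
    have h := measure_add_measure_compl (μ := μ) hK.measurableSet
    rw [hμK, add_zero, measure_univ] at h
    exact h
  have hadd : Measurable (fun p : ℝ × ℝ => p.1 + p.2) := measurable_fst.add measurable_snd
  have hsub : Measurable (fun p : ℝ × ℝ => p.1 - p.2) := measurable_fst.sub measurable_snd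
  -- the parameters
  set Λ : ℕ := ⌈(4:ℝ) * C^4⌉₊ with hΛdef
  have hΛR : (4:ℝ) * C^4 ≤ (Λ:ℝ) := Nat.le_ceil _
  have hC4 : (1:ℝ) ≤ C^4 := one_le_pow₀ hC1
  have hΛ4 : (4:ℝ) ≤ (Λ:ℝ) := le_trans (by nlinarith) hΛR
  have hΛ0 : (0:ℝ) < (Λ:ℝ) := by linarith
  have hΛ1 : (1:ℝ) < (Λ:ℝ) := by linarith
  have hΛposN : 0 < Λ := by exact_mod_cast hΛ0
  set M' : ℝ := max M 1 with hM'def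
  have hM'1 : (1:ℝ) ≤ M' := le_max_right _ _
  set N : ℕ := ⌈64 * C^2 * M'⌉₊ + 1 with hNdef
  have hN1 : 1 ≤ N := Nat.le_add_left 1 _
  have hNR : 64 * C^2 * M' < (N:ℝ) := by
    have h := Nat.le_ceil (64 * C^2 * M')
    have : ((⌈64 * C^2 * M'⌉₊ : ℝ)) < (N:ℝ) := by
      rw [hNdef]; push_cast; linarith
    linarith
  set r : ℝ := ((Λ:ℝ) ^ (2*N))⁻¹ with hrdef
  have hr0 : 0 < r := by positivity
  have hr1 : r < 1 := by
    rw [hrdef]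
    apply inv_lt_one_of_one_lt₀
    have h2N : 2*N ≠ 0 := by rw [hNdef]; omega
    exact one_lt_pow₀ hΛ1 h2N
  -- scales
  have hscale : ∀ k, k < N → (Λ:ℝ) ^ (2*k+1) * r < 1 := by
    intro k hk
    rw [hrdef, mul_inv_lt_iff₀ (by positivity), one_mul]
    exact pow_lt_pow_right₀ hΛ1 (by omega)
  have hsk1 : ∀ k, k < N → (Λ:ℝ) ^ (2*k) * r < 1 := by
    intro k hk
    have h1 : (Λ:ℝ) ^ (2*k) ≤ (Λ:ℝ) ^ (2*k+1) := pow_le_pow_right₀ (le_of_lt hΛ1) (by omega)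
    have := hscale k hk
    nlinarith
  -- the difference and sum measures
  set lam : Measure ℝ := Measure.map (fun p : ℝ × ℝ => p.1 - p.2) (μ.prod μ) with hlamdef
  set nu : Measure ℝ := Measure.map (fun p : ℝ × ℝ => p.1 + p.2) (μ.prod μ) with hnudef
  haveI hlamP : IsProbabilityMeasure lam := Measure.isProbabilityMeasure_map hsub.aemeasurable
  haveI hnuP : IsProbabilityMeasure nu := Measure.isProbabilityMeasure_map hadd.aemeasurable
  -- the ball values of lam
  have lam_ball : ∀ ρ : ℝ, lam (ball 0 ρ) = ∫⁻ x, μ (ball x ρ) ∂μ := by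
    intro ρ
    rw [hlamdef, Measure.map_apply hsub measurableSet_ball,
      Measure.prod_apply (hsub measurableSet_ball)]
    refine lintegral_congr fun x => ?_
    congr 1
    ext y
    simp [Real.dist_eq, abs_sub_comm]
  clear_value nu
  clear_value lam
  clear_value r
  clear_value N
  clear_value M'
  clear_value Λ
  have Dlow : ∀ ρ : ℝ, 0 < ρ → ρ < 1 →
      ENNReal.ofReal (C⁻¹ * ρ ^ (1/2:ℝ)) ≤ lam (ball 0 ρ) := by
    intro ρ h0 h1
    rw [lam_ball]
    calc ENNReal.ofReal (C⁻¹ * ρ ^ (1/2:ℝ))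
        = ENNReal.ofReal (C⁻¹ * ρ ^ (1/2:ℝ)) * μ K := by rw [hK1, mul_one]
      _ = ∫⁻ x, K.indicator (fun _ => ENNReal.ofReal (C⁻¹ * ρ ^ (1/2:ℝ))) x ∂μ := by
          rw [lintegral_indicator hK.measurableSet, setLIntegral_const]
      _ ≤ ∫⁻ x, μ (ball x ρ) ∂μ := by
          refine lintegral_mono fun x => ?_
          by_cases hx : x ∈ K
          · simpa [hx] using (hreg x hx ρ h0 h1).1
          · simp [hx]
  have Dhigh : ∀ ρ : ℝ, 0 < ρ → ρ < 1 →
      lam (ball 0 ρ) ≤ ENNReal.ofReal (C * ρ ^ (1/2:ℝ)) := by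
    intro ρ h0 h1
    rw [lam_ball]
    have hae : ∀ᵐ x ∂μ, μ (ball x ρ) ≤ ENNReal.ofReal (C * ρ ^ (1/2:ℝ)) := by
      have hmem : ∀ᵐ x ∂μ, x ∈ K := by
        rw [ae_iff]
        exact hμK
      filter_upwards [hmem] with x hx
      exact (hreg x hx ρ h0 h1).2
    calc ∫⁻ x, μ (ball x ρ) ∂μ
        ≤ ∫⁻ _x, ENNReal.ofReal (C * ρ ^ (1/2:ℝ)) ∂μ := lintegral_mono_ae hae
      _ = ENNReal.ofReal (C * ρ ^ (1/2:ℝ)) := by simp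
  -- annuli
  set Ann : ℕ → Set ℝ := fun k =>
    ball (0:ℝ) ((Λ:ℝ) ^ (2*k+1) * r) \ ball 0 ((Λ:ℝ) ^ (2*k) * r) with hAnndef
  have ann_low : ∀ k, k < N →
      ENNReal.ofReal (C⁻¹/2 * ((Λ:ℝ) ^ (2*k+1) * r) ^ (1/2:ℝ)) ≤ lam (Ann k) := by
    intro k hk
    have hbpos : (0:ℝ) < (Λ:ℝ) ^ (2*k+1) * r := by positivity
    have hspos : (0:ℝ) < (Λ:ℝ) ^ (2*k) * r := by positivity
    have hsub' : lam (ball 0 ((Λ:ℝ) ^ (2*k+1) * r)) ≤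
        lam (Ann k) + lam (ball 0 ((Λ:ℝ) ^ (2*k) * r)) := by
      refine le_trans (measure_mono ?_) (measure_union_le _ _)
      intro t ht
      by_cases h : t ∈ ball (0:ℝ) ((Λ:ℝ) ^ (2*k) * r)
      · exact Or.inr h
      · exact Or.inl ⟨ht, h⟩
    have h1 : ENNReal.ofReal (C⁻¹ * ((Λ:ℝ) ^ (2*k+1) * r) ^ (1/2:ℝ)) -
        ENNReal.ofReal (C * ((Λ:ℝ) ^ (2*k) * r) ^ (1/2:ℝ)) ≤ lam (Ann k) := by
      rw [tsub_le_iff_right]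
      calc ENNReal.ofReal (C⁻¹ * ((Λ:ℝ) ^ (2*k+1) * r) ^ (1/2:ℝ))
          ≤ lam (ball 0 ((Λ:ℝ) ^ (2*k+1) * r)) := Dlow _ hbpos (hscale k hk)
        _ ≤ lam (Ann k) + lam (ball 0 ((Λ:ℝ) ^ (2*k) * r)) := hsub'
        _ ≤ lam (Ann k) + ENNReal.ofReal (C * ((Λ:ℝ) ^ (2*k) * r) ^ (1/2:ℝ)) := by
            gcongr
            exact Dhigh _ hspos (hsk1 k hk)
    refine le_trans ?_ h1
    rw [← ENNReal.ofReal_sub _ (by positivity)]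
    apply ENNReal.ofReal_le_ofReal
    -- real arithmetic: C * s^{1/2} ≤ C⁻¹/2 * b^{1/2}, b = Λ * s
    have hΛhalf : (2*C^2 : ℝ) ≤ (Λ:ℝ) ^ ((1:ℝ)/2) := by
      have h1 : ((2*C^2 : ℝ))^(2:ℕ) ≤ (Λ:ℝ) := by nlinarith
      calc (2*C^2 : ℝ) = (((2*C^2:ℝ))^(2:ℕ)) ^ ((1:ℝ)/2) := by
            rw [← Real.rpow_natCast (2*C^2) 2, ← Real.rpow_mul (by positivity)]
            norm_num
        _ ≤ (Λ:ℝ) ^ ((1:ℝ)/2) := Real.rpow_le_rpow (by positivity) h1 (by norm_num)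
    have hb_eq : ((Λ:ℝ) ^ (2*k+1) * r) ^ ((1:ℝ)/2)
        = (Λ:ℝ) ^ ((1:ℝ)/2) * ((Λ:ℝ) ^ (2*k) * r) ^ ((1:ℝ)/2) := by
      rw [show (Λ:ℝ) ^ (2*k+1) * r = (Λ:ℝ) * ((Λ:ℝ) ^ (2*k) * r) by ring,
        Real.mul_rpow (by positivity) (by positivity)]
    have hsroot : (0:ℝ) < ((Λ:ℝ) ^ (2*k) * r) ^ ((1:ℝ)/2) := Real.rpow_pos_of_pos hspos _
    have hCinv : (0:ℝ) < C⁻¹ := by positivity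
    have key : C * ((Λ:ℝ) ^ (2*k) * r) ^ ((1:ℝ)/2)
        ≤ C⁻¹/2 * ((Λ:ℝ) ^ (2*k+1) * r) ^ ((1:ℝ)/2) := by
      rw [hb_eq]
      have : C⁻¹/2 * ((Λ:ℝ) ^ ((1:ℝ)/2) * ((Λ:ℝ) ^ (2*k) * r) ^ ((1:ℝ)/2))
          ≥ C⁻¹/2 * ((2*C^2) * ((Λ:ℝ) ^ (2*k) * r) ^ ((1:ℝ)/2)) := by
        gcongr
      have hCC : C⁻¹ * C^2 = C := by rw [pow_two, inv_mul_cancel_left₀ (ne_of_gt hC0)]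
      nlinarith [hsroot]
    have hble : C⁻¹ * ((Λ:ℝ) ^ (2*k+1) * r) ^ ((1:ℝ)/2) -
        C * ((Λ:ℝ) ^ (2*k) * r) ^ ((1:ℝ)/2)
        ≥ C⁻¹ * ((Λ:ℝ) ^ (2*k+1) * r) ^ ((1:ℝ)/2) -
        C⁻¹/2 * ((Λ:ℝ) ^ (2*k+1) * r) ^ ((1:ℝ)/2) := by linarith
    have : C⁻¹ * ((Λ:ℝ) ^ (2*k+1) * r) ^ ((1:ℝ)/2) -
        C⁻¹/2 * ((Λ:ℝ) ^ (2*k+1) * r) ^ ((1:ℝ)/2)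
        = C⁻¹/2 * ((Λ:ℝ) ^ (2*k+1) * r) ^ ((1:ℝ)/2) := by ring
    linarith
  -- intervals
  set Iv : ℤ → Set ℝ := fun j => Set.Ico ((j:ℝ)*r) ((j:ℝ)*r + r) with hIvdef
  set Jk : ℕ → Finset ℤ := fun k =>
    (Finset.Ico (-((Λ^(2*k+1) : ℕ) : ℤ) - 1) (((Λ^(2*k+1) : ℕ) : ℤ) + 1)).filter
      (fun j => (Iv j ∩ Ann k).Nonempty) with hJkdef
  -- covering
  have cover : ∀ k, Ann k ⊆ ⋃ j ∈ Jk k, Iv j := by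
    intro k t ht
    have htb : |t| < (Λ:ℝ) ^ (2*k+1) * r := by
      have := ht.1
      rwa [mem_ball, Real.dist_eq, sub_zero] at this
    set j : ℤ := ⌊t/r⌋ with hjdef
    have hj1 : (j:ℝ) ≤ t/r := Int.floor_le _
    have hj2 : t/r < (j:ℝ) + 1 := Int.lt_floor_add_one _
    have htIv : t ∈ Iv j := by
      constructor
      · calc (j:ℝ) * r ≤ (t/r) * r := by gcongr
          _ = t := div_mul_cancel₀ t (ne_of_gt hr0)
      · have : t = (t/r) * r := (div_mul_cancel₀ t (ne_of_gt hr0)).symm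
        rw [this]
        calc (t/r) * r < ((j:ℝ) + 1) * r := by gcongr
          _ = (j:ℝ) * r + r := by ring
    have hcast : ((Λ^(2*k+1) : ℕ) : ℝ) = (Λ:ℝ) ^ (2*k+1) := by push_cast; ring
    have hmem : j ∈ Jk k := by
      rw [hJkdef]
      simp only [Finset.mem_filter, Finset.mem_Ico]
      refine ⟨⟨?_, ?_⟩, ⟨t, htIv, ht⟩⟩
      · -- -(m) - 1 ≤ j
        have h1 : -((Λ:ℝ) ^ (2*k+1) * r) < t := by
          rcases abs_lt.mp htb with ⟨h, _⟩; linarith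
        have h2 : -((Λ:ℝ) ^ (2*k+1)) < t/r := by
          rw [neg_lt, ← neg_div]
          exact (div_lt_iff₀ hr0).mpr (by nlinarith [hscale k, hr0])
        have : -(((Λ^(2*k+1) : ℕ) : ℝ)) - 1 < (j:ℝ) := by
          rw [hcast]; linarith
        have := (by exact_mod_cast this : -((Λ^(2*k+1) : ℕ) : ℤ) - 1 < j)
        omega
      · have h1 : t < (Λ:ℝ) ^ (2*k+1) * r := (abs_lt.mp htb).2
        have h2 : t/r < (Λ:ℝ) ^ (2*k+1) := (div_lt_iff₀ hr0).mpr (by linarith)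
        have : (j:ℝ) < ((Λ^(2*k+1) : ℕ) : ℝ) := by rw [hcast]; linarith
        have := (by exact_mod_cast this : j < ((Λ^(2*k+1) : ℕ) : ℤ))
        omega
    exact Set.mem_biUnion hmem htIv
  -- cardinality bound
  have card_le : ∀ k, (Jk k).card ≤ 4 * Λ^(2*k+1) := by
    intro k
    have h1 : (Jk k).card ≤ (Finset.Ico (-((Λ^(2*k+1) : ℕ) : ℤ) - 1)
        (((Λ^(2*k+1) : ℕ) : ℤ) + 1)).card := by
      rw [hJkdef]; exact Finset.card_filter_le _ _
    have h2 : (Finset.Ico (-((Λ^(2*k+1) : ℕ) : ℤ) - 1) (((Λ^(2*k+1) : ℕ) : ℤ) + 1)).card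
        = 2 * Λ^(2*k+1) + 2 := by
      rw [Int.card_Ico]
      omega
    have h3 : 2 * Λ^(2*k+1) + 2 ≤ 4 * Λ^(2*k+1) := by
      have : 1 ≤ Λ^(2*k+1) := Nat.one_le_pow _ _ hΛposN
      omega
    exact (h1.trans (le_of_eq h2)).trans h3
  -- per annulus energy lower bound
  have hIvMeas : ∀ j : ℤ, MeasurableSet (Iv j) := fun j => measurableSet_Ico
  have ann_sum : ∀ k, lam (Ann k) ≤ ∑ j ∈ Jk k, lam (Iv j) := fun k =>
    le_trans (measure_mono (cover k)) (measure_biUnion_finset_le _ _)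
  have per_annulus : ∀ k, k < N →
      ENNReal.ofReal (C⁻¹^2 * r / 32) ≤ ∑ j ∈ Jk k, lam (Iv j) ^ 2 := by
    intro k hk
    have hmR : (0:ℝ) < (Λ:ℝ)^(2*k+1) := by positivity
    have h1 : (lam (Ann k))^2 ≤ (2 * (Jk k).card) * ∑ j ∈ Jk k, lam (Iv j) ^ 2 := by
      calc (lam (Ann k))^2 ≤ (∑ j ∈ Jk k, lam (Iv j))^2 := by
            gcongr
            exact ann_sum k
        _ ≤ _ := sq_sum_le_card (Jk k) (fun j => lam (Iv j))
    have hcard : (2:ℝ≥0∞) * (Jk k).card ≤ ((8 * Λ^(2*k+1) : ℕ) : ℝ≥0∞) := by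
      have h2 : 2 * (Jk k).card ≤ 8 * Λ^(2*k+1) := by
        have := card_le k; omega
      calc (2:ℝ≥0∞) * (Jk k).card = ((2 * (Jk k).card : ℕ) : ℝ≥0∞) := by push_cast; ring
        _ ≤ _ := Nat.cast_le.mpr h2
    have h2 : ENNReal.ofReal (C⁻¹^2/4 * ((Λ:ℝ)^(2*k+1) * r))
        ≤ (lam (Ann k))^2 := by
      have hx : (0:ℝ) ≤ (Λ:ℝ)^(2*k+1) * r := by positivity
      have hroot : (((Λ:ℝ)^(2*k+1) * r)^((1:ℝ)/2))^(2:ℕ) = (Λ:ℝ)^(2*k+1) * r := by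
        rw [← Real.rpow_natCast (((Λ:ℝ)^(2*k+1) * r)^((1:ℝ)/2)) 2,
          ← Real.rpow_mul hx, show ((1:ℝ)/2 * (2:ℕ) : ℝ) = 1 by norm_num, Real.rpow_one]
      have h3 : (C⁻¹/2 * ((Λ:ℝ)^(2*k+1) * r)^((1:ℝ)/2))^(2:ℕ)
          = C⁻¹^2/4 * ((Λ:ℝ)^(2*k+1) * r) := by
        rw [mul_pow, hroot]
        ring
      rw [← h3, ENNReal.ofReal_pow (by positivity)]
      gcongr
      exact ann_low k hk
    have h4 : ENNReal.ofReal (C⁻¹^2/4 * ((Λ:ℝ)^(2*k+1) * r))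
        ≤ (∑ j ∈ Jk k, lam (Iv j) ^ 2) * ((8 * Λ^(2*k+1) : ℕ) : ℝ≥0∞) := by
      calc ENNReal.ofReal (C⁻¹^2/4 * ((Λ:ℝ)^(2*k+1) * r)) ≤ (lam (Ann k))^2 := h2
        _ ≤ (2 * (Jk k).card) * ∑ j ∈ Jk k, lam (Iv j) ^ 2 := h1
        _ ≤ ((8 * Λ^(2*k+1) : ℕ) : ℝ≥0∞) * ∑ j ∈ Jk k, lam (Iv j) ^ 2 := by
            gcongr
        _ = _ := mul_comm _ _
    have h5 := ENNReal.div_le_of_le_mul h4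
    have hcast8 : ((8 * Λ^(2*k+1) : ℕ) : ℝ≥0∞) = ENNReal.ofReal (8 * (Λ:ℝ)^(2*k+1)) := by
      rw [← ENNReal.ofReal_natCast]
      congr 1
      push_cast
      ring
    rw [hcast8, ← ENNReal.ofReal_div_of_pos (by positivity)] at h5
    refine le_trans (le_of_eq ?_) h5
    congr 1
    field_simp
    ring
  -- disjointness of the index families
  have hJdisj : Set.PairwiseDisjoint ↑(Finset.range N) Jk := by
    have key : ∀ k1 k2, k1 < k2 → Disjoint (Jk k1) (Jk k2) := by
      intro k1 k2 hlt
      rw [Finset.disjoint_left]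
      intro j hj1 hj2
      obtain ⟨-, t, htI, htA⟩ := Finset.mem_filter.mp hj1
      obtain ⟨-, s, hsI, hsA⟩ := Finset.mem_filter.mp hj2
      have ht : |t| < (Λ:ℝ)^(2*k1+1) * r := by
        have := htA.1
        rwa [mem_ball, Real.dist_eq, sub_zero] at this
      have hs : (Λ:ℝ)^(2*k2) * r ≤ |s| := by
        have := hsA.2
        rw [mem_ball, Real.dist_eq, sub_zero] at this
        linarith [not_lt.mp this]
      have hst : |s - t| < r := by
        obtain ⟨ht1, ht2⟩ := htI
        obtain ⟨hs1, hs2⟩ := hsI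
        rw [abs_sub_lt_iff]
        constructor <;> linarith
      have habs : |s| ≤ |t| + |s - t| := by
        calc |s| = |t + (s - t)| := by ring_nf
          _ ≤ |t| + |s - t| := abs_add_le _ _
      have hpow : (Λ:ℝ)^(2*k1+2) ≤ (Λ:ℝ)^(2*k2) :=
        pow_le_pow_right₀ (by linarith) (by omega)
      have c1 : (Λ:ℝ)^(2*k1+2) * r ≤ |s| := by
        refine le_trans ?_ hs
        gcongr
      have c2 : |s| < (Λ:ℝ)^(2*k1+1) * r + r := by linarith
      have hΛpow1 : (1:ℝ) ≤ (Λ:ℝ)^(2*k1+1) := one_le_pow₀ (by linarith)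
      have c3 : 4 * ((Λ:ℝ)^(2*k1+1) * r) ≤ (Λ:ℝ)^(2*k1+2) * r := by
        have h44 : 4 * (Λ:ℝ)^(2*k1+1) ≤ (Λ:ℝ)^(2*k1+2) := by
          have : (Λ:ℝ)^(2*k1+2) = (Λ:ℝ) * (Λ:ℝ)^(2*k1+1) := by ring
          rw [this]
          nlinarith
        nlinarith
      have c4 : r ≤ (Λ:ℝ)^(2*k1+1) * r := by nlinarith
      linarith
    intro k1 h1 k2 h2 hne
    rcases lt_or_gt_of_ne hne with h | h
    · exact key _ _ h
    · exact (key _ _ h).symm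
  have hIvdisjoint : ∀ j1 j2 : ℤ, j1 ≠ j2 → Disjoint (Iv j1) (Iv j2) := by
    intro j1 j2 hne
    have key : ∀ i1 i2 : ℤ, i1 < i2 → Disjoint (Iv i1) (Iv i2) := by
      intro i1 i2 hlt
      rw [hIvdef]
      apply Set.Ico_disjoint_Ico.mpr
      have h12 : (i1:ℝ) + 1 ≤ (i2:ℝ) := by exact_mod_cast hlt
      have : (i1:ℝ)*r + r ≤ (i2:ℝ)*r := by nlinarith
      rw [min_le_iff, le_max_iff]
      left; right
      linarith
    rcases lt_or_gt_of_ne hne with h | h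
    · exact key _ _ h
    · exact (key _ _ h).symm
  -- global lower bound for the energy of lam
  have hE : MeasurableSet {p : ℝ × ℝ | |p.1 - p.2| ≤ r} := by
    apply measurableSet_le
    · exact (measurable_fst.sub measurable_snd).abs
    · exact measurable_const
  set B : Finset ℤ := (Finset.range N).biUnion Jk with hBdef
  have lower : (N : ℝ≥0∞) * ENNReal.ofReal (C⁻¹^2 * r / 32)
      ≤ (lam.prod lam) {p : ℝ × ℝ | |p.1 - p.2| ≤ r} := by
    calc (N : ℝ≥0∞) * ENNReal.ofReal (C⁻¹^2 * r / 32)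
        = ∑ _k ∈ Finset.range N, ENNReal.ofReal (C⁻¹^2 * r / 32) := by
          rw [Finset.sum_const, Finset.card_range, nsmul_eq_mul]
      _ ≤ ∑ k ∈ Finset.range N, ∑ j ∈ Jk k, lam (Iv j) ^ 2 :=
          Finset.sum_le_sum fun k hk => per_annulus k (Finset.mem_range.mp hk)
      _ = ∑ j ∈ B, lam (Iv j) ^ 2 := (Finset.sum_biUnion hJdisj).symm
      _ = (lam.prod lam) (⋃ j ∈ B, Iv j ×ˢ Iv j) := by
          rw [measure_biUnion_finset ?_ (fun j _ => (hIvMeas j).prod (hIvMeas j))]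
          · exact Finset.sum_congr rfl fun j _ => by rw [Measure.prod_prod, sq]
          · intro j1 h1 j2 h2 hne
            have hd := hIvdisjoint j1 j2 hne
            simp only [Function.onFun]
            rw [Set.disjoint_left]
            intro p hp1 hp2
            exact Set.disjoint_left.mp hd hp1.1 hp2.1
      _ ≤ (lam.prod lam) {p : ℝ × ℝ | |p.1 - p.2| ≤ r} := by
          apply measure_mono
          intro p hp
          simp only [Set.mem_iUnion] at hp
          obtain ⟨j, _, hp1, hp2⟩ := hp
          obtain ⟨ha1, ha2⟩ := hp1
          obtain ⟨hb1, hb2⟩ := hp2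
          simp only [Set.mem_setOf_eq]
          rw [abs_sub_le_iff]
          constructor <;> linarith
  -- upper bound for the energy of nu
  have upper : (nu.prod nu) {p : ℝ × ℝ | |p.1 - p.2| ≤ r}
      ≤ ENNReal.ofReal M' * ENNReal.ofReal (2*r) := by
    rw [Measure.prod_apply hE]
    calc ∫⁻ s, nu (Prod.mk s ⁻¹' {p : ℝ × ℝ | |p.1 - p.2| ≤ r}) ∂nu
        ≤ ∫⁻ _s, ENNReal.ofReal M' * ENNReal.ofReal (2*r) ∂nu := by
          refine lintegral_mono fun s => ?_
          have hpre : Prod.mk s ⁻¹' {p : ℝ × ℝ | |p.1 - p.2| ≤ r} = closedBall s r := by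
            ext t
            simp [Real.dist_eq, abs_sub_comm]
          rw [hpre]
          calc nu (closedBall s r) ≤ ENNReal.ofReal M * volume (closedBall s r) :=
              hbd _ measurableSet_closedBall
            _ = ENNReal.ofReal M * ENNReal.ofReal (2*r) := by rw [Real.volume_closedBall]
            _ ≤ ENNReal.ofReal M' * ENNReal.ofReal (2*r) := by
                gcongr
                rw [hM'def]
                exact le_max_left _ _
      _ = ENNReal.ofReal M' * ENNReal.ofReal (2*r) := by simp
  -- combine
  have hEnergyEq := sum_energy_eq_diff_energy μ r
  rw [← hnudef, ← hlamdef] at hEnergyEq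
  have main : (N : ℝ≥0∞) * ENNReal.ofReal (C⁻¹^2 * r / 32)
      ≤ ENNReal.ofReal M' * ENNReal.ofReal (2*r) :=
    le_trans lower (le_trans (le_of_eq hEnergyEq.symm) upper)
  have hreal : (N:ℝ) * (C⁻¹^2 * r / 32) ≤ M' * (2*r) := by
    have hl : (N : ℝ≥0∞) * ENNReal.ofReal (C⁻¹^2 * r / 32)
        = ENNReal.ofReal ((N:ℝ) * (C⁻¹^2 * r / 32)) := by
      rw [ENNReal.ofReal_mul (by positivity), ENNReal.ofReal_natCast]
    have hr' : ENNReal.ofReal M' * ENNReal.ofReal (2*r)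
        = ENNReal.ofReal (M' * (2*r)) := by
      rw [← ENNReal.ofReal_mul (by linarith)]
    rw [hl, hr'] at main
    exact (ENNReal.ofReal_le_ofReal_iff (by positivity)).mp main
  -- final contradiction
  have hc2 : (0:ℝ) < C^2 := by positivity
  have h32 : (N:ℝ) * C⁻¹^2 * r ≤ 64 * M' * r := by nlinarith
  have h33 : (N:ℝ) * C⁻¹^2 ≤ 64 * M' :=
    le_of_mul_le_mul_right (by linarith) hr0
  have h34 : (N:ℝ) ≤ 64 * M' * C^2 := by
    have hCC : C⁻¹^2 * C^2 = 1 := by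
      field_simp
    calc (N:ℝ) = (N:ℝ) * (C⁻¹^2 * C^2) := by rw [hCC, mul_one]
      _ = ((N:ℝ) * C⁻¹^2) * C^2 := by ring
      _ ≤ (64 * M') * C^2 := by nlinarith
  nlinarith
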